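/- For every integer n ≥ 1, the product of all binomial coefficients in row n of Pascal's triangle satisfies ∏_{k=0}^{n} C(n, k) ≥ e^{n²/8 − 1}. -/
import Mathlib

private lemma two_pow_le_centralBinom : ∀ k : ℕ, 2 ^ k ≤ Nat.centralBinom k
  | 0 => by simp [Nat.centralBinom]
  | (k+1) => by
    have ih := two_pow_le_centralBinom k
    have h := Nat.succ_mul_centralBinom_succ k
    have h1 : (k+1) * 2 ^ (k+1) ≤ (k+1) * Nat.centralBinom (k+1) := by
      rw [h]
      calc (k+1) * 2 ^ (k+1) = 2 * (k+1) * 2 ^ k := by ring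
        _ ≤ 2 * (2*k+1) * Nat.centralBinom k := by
            apply Nat.mul_le_mul _ ih
            apply Nat.mul_le_mul_left
            omega
    exact Nat.le_of_mul_le_mul_left h1 (Nat.succ_pos k)

private lemma two_pow_min_le_choose (n k : ℕ) (hk : k ≤ n) :
    2 ^ (min k (n - k)) ≤ n.choose k := by
  rcases le_or_gt k (n - k) with h | h
  · have h2 : 2 * k ≤ n := by omega
    calc 2 ^ (min k (n-k)) = 2 ^ k := by rw [min_eq_left h]
      _ ≤ Nat.centralBinom k := two_pow_le_centralBinom k
      _ = (2*k).choose k := rfl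
      _ ≤ n.choose k := Nat.choose_le_choose k h2
  · have h2 : 2 * (n - k) ≤ n := by omega
    calc 2 ^ (min k (n-k)) = 2 ^ (n-k) := by rw [min_eq_right h.le]
      _ ≤ Nat.centralBinom (n-k) := two_pow_le_centralBinom (n-k)
      _ = (2*(n-k)).choose (n-k) := rfl
      _ ≤ n.choose (n-k) := Nat.choose_le_choose (n-k) h2
      _ = n.choose k := Nat.choose_symm hk

private def S (n : ℕ) : ℕ := ∑ k ∈ Finset.range (n+1), min k (n - k)

private lemma S_rec (n : ℕ) : S (n+2) = S n + (n+1) := by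
  unfold S
  rw [Finset.sum_range_succ]
  simp only [Nat.sub_self, min_self]
  rw [Finset.sum_range_succ']
  have : ∀ i ∈ Finset.range (n+1), min (i+1) (n+2 - (i+1)) = min i (n - i) + 1 := by
    intro i hi
    simp only [Finset.mem_range] at hi
    omega
  rw [Finset.sum_congr rfl this, Finset.sum_add_distrib]
  simp

private lemma sq_le_S : ∀ n : ℕ, n ^ 2 ≤ 4 * S n + 1
  | 0 => by simp [S]
  | 1 => by decide
  | (n+2) => by
    have ih := sq_le_S n
    rw [S_rec]
    have : (n+2)^2 = n^2 + 4*n + 4 := by ring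
    omega

/-- For every integer `n ≥ 1`, `∏_{k=0}^{n} C(n, k) ≥ e^{n²/8 − 1}`. -/
theorem prod_choose_ge (n : ℕ) (hn : 1 ≤ n) :
    Real.exp ((n : ℝ) ^ 2 / 8 - 1) ≤ ∏ k ∈ Finset.range (n + 1), (Nat.choose n k : ℝ) := by
  have hS : (n : ℝ) ^ 2 ≤ 4 * (S n : ℝ) + 1 := by
    have := sq_le_S n
    exact_mod_cast this
  have h1 : Real.exp ((n : ℝ) ^ 2 / 8 - 1) ≤ Real.exp ((S n : ℝ) * (1/2)) := by
    apply Real.exp_le_exp.2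
    nlinarith
  have h2 : Real.exp ((S n : ℝ) * (1/2)) = Real.exp (1/2) ^ (S n) := by
    rw [← Real.exp_nat_mul]
  have h3 : Real.exp (1/2) ≤ 2 := by
    have hsq : Real.exp (1/2) * Real.exp (1/2) = Real.exp 1 := by
      rw [← Real.exp_add]; norm_num
    nlinarith [Real.exp_one_lt_d9, Real.exp_pos (1/2 : ℝ)]
  have h4 : Real.exp (1/2) ^ (S n) ≤ (2 : ℝ) ^ (S n) :=
    pow_le_pow_left₀ (Real.exp_pos _).le h3 _
  have h5 : ((2 : ℝ)) ^ (S n) ≤ ∏ k ∈ Finset.range (n + 1), (Nat.choose n k : ℝ) := by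
    have hnat : 2 ^ (S n) ≤ ∏ k ∈ Finset.range (n+1), n.choose k := by
      unfold S
      rw [← Finset.prod_pow_eq_pow_sum]
      apply Finset.prod_le_prod'
      intro k hk
      exact two_pow_min_le_choose n k (by simpa using Nat.lt_succ_iff.mp (Finset.mem_range.mp hk))
    calc ((2:ℝ)) ^ (S n) = ((2 ^ (S n) : ℕ) : ℝ) := by push_cast; ring
      _ ≤ ((∏ k ∈ Finset.range (n+1), n.choose k : ℕ) : ℝ) := by exact_mod_cast hnat
      _ = ∏ k ∈ Finset.range (n + 1), (Nat.choose n k : ℝ) := by push_cast; ring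
  calc Real.exp ((n : ℝ) ^ 2 / 8 - 1) ≤ Real.exp ((S n : ℝ) * (1/2)) := h1
    _ = Real.exp (1/2) ^ (S n) := h2
    _ ≤ (2:ℝ) ^ (S n) := h4
    _ ≤ _ := h5
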